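/- Let S be a finite set, V a complex inner product space with orthonormal basis (e_s)_{s∈S}, i, j : S → ℤ functions, and q ∈ ℂ with |q| = 1. Define U e_s = (-1)^{i(s)} q^{j(s)} e_s and ψ = Σ_{s∈S} e_s. Let ∂ : V → V be linear with ∂ ∘ ∂ = 0 such that for each s, ∂ e_s lies in the span of { e_{s'} : i(s') = i(s)+1, j(s') = j(s) }. For integers i₀, j₀ let C^{i₀,j₀} = span{ e_s : i(s) = i₀, j(s) = j₀ }, and let H^{i₀,j₀} = ( ker(∂) ∩ C^{i₀,j₀} ) / ∂(C^{i₀-1,j₀}) (a well-defined quotient since ∂(C^{i₀-1,j₀}) ⊆ ker(∂) ∩ C^{i₀,j₀}). Then ⟨ψ, U ψ⟩ = Σ_{j₀ ∈ j(S)} q^{j₀} Σ_{i₀ ∈ ℤ} (-1)^{i₀} dim H^{i₀,j₀}. -/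

import Mathlib

open Module Submodule LinearMap

private theorem khovanov_euler_aux {V : Type*} [AddCommGroup V] [Module ℂ V] (d : V →ₗ[ℂ] V)
    (hdd : d ∘ₗ d = 0) (C : ℤ → Submodule ℂ V)
    (hfin : ∀ n, FiniteDimensional ℂ (C n))
    (hmap : ∀ n, (C n).map d ≤ C (n + 1))
    (T : Finset ℤ) (hT : ∀ n ∉ T, C n = ⊥) :
    ∑ᶠ n : ℤ, (-1 : ℂ) ^ n *
        (finrank ℂ (↥(LinearMap.ker d ⊓ C n) ⧸
          Submodule.comap (LinearMap.ker d ⊓ C n).subtype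
            (Submodule.map d (C (n - 1)))) : ℂ)
      = ∑ᶠ n : ℤ, (-1 : ℂ) ^ n * (finrank ℂ (C n) : ℂ) := by
  have hBker : ∀ n : ℤ, (C n).map d ≤ LinearMap.ker d := by
    intro n x hx
    rcases hx with ⟨y, _, rfl⟩
    have : (d ∘ₗ d) y = 0 := by rw [hdd]; rfl
    simpa [LinearMap.mem_ker] using this
  have hBZ : ∀ n : ℤ, (C (n - 1)).map d ≤ LinearMap.ker d ⊓ C n := by
    intro n
    refine le_inf (hBker _) ?_
    simpa using hmap (n - 1)
  haveI : ∀ n, FiniteDimensional ℂ ↥(LinearMap.ker d ⊓ C n) := fun n =>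
    haveI := hfin n; Submodule.finiteDimensional_of_le inf_le_right
  haveI : ∀ n, FiniteDimensional ℂ ↥((C n).map d) := fun n =>
    haveI := hfin n; Module.Finite.map _ _
  set fZ : ℤ → ℂ := fun n => (-1 : ℂ) ^ n * (finrank ℂ ↥(LinearMap.ker d ⊓ C n) : ℂ) with hfZ
  set fB : ℤ → ℂ := fun n => (-1 : ℂ) ^ n * (finrank ℂ ↥((C n).map d) : ℂ) with hfB
  have hsZ : Function.support fZ ⊆ (T : Set ℤ) := by
    intro n hn
    by_contra h
    have := hT n h
    apply hn
    simp [hfZ, this]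
  have hsB : Function.support fB ⊆ (T : Set ℤ) := by
    intro n hn
    by_contra h
    have := hT n h
    apply hn
    simp [hfB, this]
  have hsB' : Function.support (fun n : ℤ => fB (n - 1)) ⊆ ((T.image (· + 1)) : Set ℤ) := by
    intro n hn
    have : n - 1 ∈ (T : Set ℤ) := hsB hn
    simp only [Finset.coe_image, Set.mem_image, Finset.mem_coe]
    exact ⟨n - 1, this, by ring⟩
  have hfinZ : (Function.support fZ).Finite := Set.Finite.subset T.finite_toSet hsZ
  have hfinB' : (Function.support (fun n : ℤ => fB (n - 1))).Finite :=
    Set.Finite.subset (T.image (· + 1)).finite_toSet hsB'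
  have hfinB : (Function.support fB).Finite := Set.Finite.subset T.finite_toSet hsB
  have hH : ∀ n : ℤ, (-1 : ℂ) ^ n *
      (finrank ℂ (↥(LinearMap.ker d ⊓ C n) ⧸
        Submodule.comap (LinearMap.ker d ⊓ C n).subtype
          (Submodule.map d (C (n - 1)))) : ℂ) = fZ n + fB (n - 1) := by
    intro n
    have key : finrank ℂ (↥(LinearMap.ker d ⊓ C n) ⧸
        Submodule.comap (LinearMap.ker d ⊓ C n).subtype (Submodule.map d (C (n - 1))))
        + finrank ℂ ↥((C (n - 1)).map d) = finrank ℂ ↥(LinearMap.ker d ⊓ C n) := by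
      have := Submodule.finrank_quotient_add_finrank
        (Submodule.comap (LinearMap.ker d ⊓ C n).subtype (Submodule.map d (C (n - 1))))
      rwa [(Submodule.comapSubtypeEquivOfLe (hBZ n)).finrank_eq] at this
    have : ((finrank ℂ (↥(LinearMap.ker d ⊓ C n) ⧸
        Submodule.comap (LinearMap.ker d ⊓ C n).subtype
          (Submodule.map d (C (n - 1))))) : ℂ)
        = (finrank ℂ ↥(LinearMap.ker d ⊓ C n) : ℂ) - (finrank ℂ ↥((C (n - 1)).map d) : ℂ) := by
      rw [← key]; push_cast; ring
    rw [this, hfZ, hfB]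
    have hpow : (-1 : ℂ) ^ (n - 1) = -(-1 : ℂ) ^ n := by
      rw [show n - 1 = n + (-1) by ring, zpow_add₀ (by norm_num : (-1 : ℂ) ≠ 0)]
      norm_num
    simp only []
    rw [hpow]; ring
  have hCd : ∀ n : ℤ, (-1 : ℂ) ^ n * (finrank ℂ (C n) : ℂ) = fZ n + fB n := by
    intro n
    haveI := hfin n
    have h1 := LinearMap.finrank_range_add_finrank_ker (d.domRestrict (C n))
    rw [LinearMap.range_domRestrict, LinearMap.ker_domRestrict] at h1
    have e2 : (LinearMap.ker d).comap (C n).subtype ≃ₗ[ℂ] ↥(LinearMap.ker d ⊓ C n) := by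
      rw [show (LinearMap.ker d).comap (C n).subtype
          = (LinearMap.ker d ⊓ C n).comap (C n).subtype by
        rw [Submodule.comap_inf, Submodule.comap_subtype_self, inf_top_eq]]
      exact Submodule.comapSubtypeEquivOfLe inf_le_right
    rw [e2.finrank_eq] at h1
    have : (finrank ℂ (C n) : ℂ)
        = (finrank ℂ ↥(LinearMap.ker d ⊓ C n) : ℂ) + (finrank ℂ ↥((C n).map d) : ℂ) := by
      rw [← h1]; push_cast; ring
    rw [this, hfZ, hfB]; ring
  calc ∑ᶠ n : ℤ, (-1 : ℂ) ^ n *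
        (finrank ℂ (↥(LinearMap.ker d ⊓ C n) ⧸
          Submodule.comap (LinearMap.ker d ⊓ C n).subtype
            (Submodule.map d (C (n - 1)))) : ℂ)
      = ∑ᶠ n : ℤ, (fZ n + fB (n - 1)) := by exact finsum_congr hH
    _ = (∑ᶠ n : ℤ, fZ n) + ∑ᶠ n : ℤ, fB (n - 1) := finsum_add_distrib hfinZ hfinB'
    _ = (∑ᶠ n : ℤ, fZ n) + ∑ᶠ n : ℤ, fB n := by
        congr 1
        exact finsum_comp_equiv (Equiv.subRight (1 : ℤ))
    _ = ∑ᶠ n : ℤ, (fZ n + fB n) := (finsum_add_distrib hfinZ hfinB).symm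
    _ = ∑ᶠ n : ℤ, (-1 : ℂ) ^ n * (finrank ℂ (C n) : ℂ) := finsum_congr fun n => (hCd n).symm

/-- The bracket amplitude as a graded Euler characteristic of Khovanov homology:
`⟨ψ, U ψ⟩ = ∑_{j₀} q^{j₀} ∑_{i₀} (-1)^{i₀} dim H^{i₀,j₀}`, where
`C^{i₀,j₀}` is the span of the enhanced states of bigrading `(i₀, j₀)` and
`H^{i₀,j₀} = (ker d ∩ C^{i₀,j₀}) ⧸ d(C^{i₀-1,j₀})`. -/
theorem stmt_8 {V : Type*} [NormedAddCommGroup V] [InnerProductSpace ℂ V]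
    {S : Type*} [Fintype S] (e : S → V) (he : Orthonormal ℂ e)
    (i j : S → ℤ) (q : ℂ) (hq : ‖q‖ = 1)
    (U : V →ₗ[ℂ] V)
    (hU : ∀ s : S, U (e s) = ((-1 : ℂ) ^ (i s) * q ^ (j s)) • e s)
    (ψ : V) (hψ : ψ = ∑ s : S, e s)
    (d : V →ₗ[ℂ] V) (hdd : d ∘ₗ d = 0)
    (C : ℤ → ℤ → Submodule ℂ V)
    (hC : ∀ i₀ j₀ : ℤ, C i₀ j₀ =
      Submodule.span ℂ (e '' {s : S | i s = i₀ ∧ j s = j₀}))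
    (hd : ∀ s : S, d (e s) ∈ C (i s + 1) (j s)) :
    (inner ℂ ψ (U ψ) : ℂ) =
      ∑ j₀ ∈ Finset.image j Finset.univ, q ^ j₀ *
        ∑ᶠ i₀ : ℤ, (-1 : ℂ) ^ i₀ *
          (Module.finrank ℂ
            (↥(LinearMap.ker d ⊓ C i₀ j₀) ⧸
              Submodule.comap (LinearMap.ker d ⊓ C i₀ j₀).subtype
                (Submodule.map d (C (i₀ - 1) j₀))) : ℂ) := by
  classical
  -- Step 1: compute the left-hand side
  have hLHS : (inner ℂ ψ (U ψ) : ℂ) = ∑ s : S, (-1 : ℂ) ^ (i s) * q ^ (j s) := by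
    rw [hψ, map_sum]
    simp only [hU]
    rw [sum_inner]
    simp only [inner_sum, inner_smul_right, orthonormal_iff_ite.mp he]
    simp [Finset.sum_ite_eq']
  rw [hLHS]
  -- Step 2: rewrite each inner finsum via the Euler characteristic
  have hfin : ∀ i₀ j₀ : ℤ, FiniteDimensional ℂ (C i₀ j₀) := by
    intro i₀ j₀
    rw [hC]
    exact FiniteDimensional.span_of_finite ℂ ((Set.toFinite _).image e)
  have hmap : ∀ j₀ n : ℤ, (C n j₀).map d ≤ C (n + 1) j₀ := by
    intro j₀ n
    rw [hC n j₀, Submodule.map_span, Submodule.span_le]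
    rintro x ⟨y, ⟨s, ⟨hs1, hs2⟩, rfl⟩, rfl⟩
    have := hd s
    rw [hs1, hs2] at this
    exact this
  have hT : ∀ j₀ : ℤ, ∀ n : ℤ, n ∉ Finset.image i Finset.univ → C n j₀ = ⊥ := by
    intro j₀ n hn
    rw [hC]
    have : {s : S | i s = n ∧ j s = j₀} = ∅ := by
      ext s
      simp only [Set.mem_setOf_eq, Set.mem_empty_iff_false, iff_false, not_and]
      intro h
      exact absurd (Finset.mem_image_of_mem i (Finset.mem_univ s)) (h ▸ hn)
    rw [this]
    simp
  have heuler : ∀ j₀ : ℤ,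
      (∑ᶠ i₀ : ℤ, (-1 : ℂ) ^ i₀ *
        (Module.finrank ℂ
          (↥(LinearMap.ker d ⊓ C i₀ j₀) ⧸
            Submodule.comap (LinearMap.ker d ⊓ C i₀ j₀).subtype
              (Submodule.map d (C (i₀ - 1) j₀))) : ℂ))
      = ∑ᶠ i₀ : ℤ, (-1 : ℂ) ^ i₀ * (finrank ℂ (C i₀ j₀) : ℂ) := fun j₀ =>
    khovanov_euler_aux d hdd (fun n => C n j₀) (fun n => hfin n j₀) (hmap j₀)
      (Finset.image i Finset.univ) (hT j₀)
  -- Step 3: the finsum of dimensions as a finite sum over the image of i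
  have hsum : ∀ j₀ : ℤ, (∑ᶠ i₀ : ℤ, (-1 : ℂ) ^ i₀ * (finrank ℂ (C i₀ j₀) : ℂ))
      = ∑ i₀ ∈ Finset.image i Finset.univ, (-1 : ℂ) ^ i₀ * (finrank ℂ (C i₀ j₀) : ℂ) := by
    intro j₀
    apply finsum_eq_sum_of_support_subset
    intro n hn
    by_contra h
    have := hT j₀ n h
    apply hn
    simp [this]
  -- Step 4: dimensions of the chain groups are fiber cardinalities
  have hdim : ∀ i₀ j₀ : ℤ, finrank ℂ (C i₀ j₀)
      = (Finset.univ.filter fun s => i s = i₀ ∧ j s = j₀).card := by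
    intro i₀ j₀
    rw [hC]
    have li : LinearIndependent ℂ (fun a : {s : S | i s = i₀ ∧ j s = j₀} => e a) :=
      he.linearIndependent.comp _ Subtype.val_injective
    have himg : Set.range (fun a : {s : S | i s = i₀ ∧ j s = j₀} => e a)
        = e '' {s : S | i s = i₀ ∧ j s = j₀} := by
      rw [show (fun a : {s : S | i s = i₀ ∧ j s = j₀} => e a)
          = e ∘ (Subtype.val : _ → S) from rfl, Set.range_comp, Subtype.range_coe]
    rw [← himg, finrank_span_eq_card li, Fintype.card_subtype]
    congr 1
  simp only [heuler]
  simp only [hsum]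
  simp only [hdim]
  -- Step 5: the combinatorial identity
  rw [← Finset.sum_fiberwise_of_maps_to
    (g := j) (fun s _ => Finset.mem_image_of_mem j (Finset.mem_univ s))
    (fun s => (-1 : ℂ) ^ (i s) * q ^ (j s))]
  refine Finset.sum_congr rfl fun j₀ _ => ?_
  rw [← Finset.sum_fiberwise_of_maps_to
    (g := i) (fun s _ => Finset.mem_image_of_mem i (Finset.mem_univ s))
    (fun s => (-1 : ℂ) ^ (i s) * q ^ (j s))]
  rw [Finset.mul_sum]
  refine Finset.sum_congr rfl fun i₀ _ => ?_
  have hconst : ∑ s ∈ (Finset.univ.filter fun s => j s = j₀).filter (fun s => i s = i₀),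
      (-1 : ℂ) ^ (i s) * q ^ (j s)
      = ∑ s ∈ (Finset.univ.filter fun s => j s = j₀).filter (fun s => i s = i₀),
        (-1 : ℂ) ^ i₀ * q ^ j₀ := by
    refine Finset.sum_congr rfl fun s hs => ?_
    simp only [Finset.mem_filter, Finset.mem_univ, true_and] at hs
    rw [hs.1, hs.2]
  rw [hconst, Finset.sum_const, Finset.filter_filter]
  have hcc : (Finset.filter (fun s => j s = j₀ ∧ i s = i₀) Finset.univ)
      = (Finset.filter (fun s => i s = i₀ ∧ j s = j₀) Finset.univ) := by
    apply Finset.filter_congr; intro s _; simp [and_comm]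
  rw [hcc]
  simp only [nsmul_eq_mul]
  ring
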